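/- With noCarry, yesCarry, maybeCarry as defined for valid triples of length r, the following recursions hold: |yesCarry(r+1)| = 3|noCarry(r)| + 6|yesCarry(r)| + 4|maybeCarry(r)|, and |maybeCarry(r+1)| = |noCarry(r)| + |yesCarry(r)| + 4|maybeCarry(r)|. -/

import Mathlib

open scoped Classical

/-- `Shadow2 n m` : every bit set in `n` is also set in `m` (i.e. `n ≤₂ m`). -/
def Shadow2 (n m : ℕ) : Prop := ∀ i, n.testBit i = true → m.testBit i = true

/-- `(a₀, a₁)` is a witness for the validity of the triple `(y, c₀, c₁)` of
length `r`: `a₀, a₁ ∈ [2^r]`, `a₀ ≥₂ c₀`, `a₁ ≥₂ c₁`, and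
`a₀ + a₁ ≡ y (mod 2^r)`. -/
def IsWitness (r y c₀ c₁ a₀ a₁ : ℕ) : Prop :=
  a₀ < 2 ^ r ∧ a₁ < 2 ^ r ∧ Shadow2 c₀ a₀ ∧ Shadow2 c₁ a₁ ∧ (a₀ + a₁) % 2 ^ r = y

/-- All triples `(y, c₀, c₁) ∈ [2^r]³`. -/
def triples (r : ℕ) : Finset (ℕ × ℕ × ℕ) :=
  Finset.range (2 ^ r) ×ˢ Finset.range (2 ^ r) ×ˢ Finset.range (2 ^ r)

/-- Valid triples all of whose witnesses have `a₀ + a₁ ≤ 2^r - 1`. -/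
noncomputable def noCarry (r : ℕ) : Finset (ℕ × ℕ × ℕ) :=
  (triples r).filter (fun v =>
    (∃ a₀ a₁, IsWitness r v.1 v.2.1 v.2.2 a₀ a₁) ∧
    ∀ a₀ a₁, IsWitness r v.1 v.2.1 v.2.2 a₀ a₁ → a₀ + a₁ ≤ 2 ^ r - 1)

/-- Valid triples all of whose witnesses have `a₀ + a₁ > 2^r - 1`. -/
noncomputable def yesCarry (r : ℕ) : Finset (ℕ × ℕ × ℕ) :=
  (triples r).filter (fun v =>
    (∃ a₀ a₁, IsWitness r v.1 v.2.1 v.2.2 a₀ a₁) ∧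
    ∀ a₀ a₁, IsWitness r v.1 v.2.1 v.2.2 a₀ a₁ → 2 ^ r - 1 < a₀ + a₁)

/-- Valid triples admitting witnesses of both kinds. -/
noncomputable def maybeCarry (r : ℕ) : Finset (ℕ × ℕ × ℕ) :=
  (triples r).filter (fun v =>
    (∃ a₀ a₁, IsWitness r v.1 v.2.1 v.2.2 a₀ a₁ ∧ a₀ + a₁ ≤ 2 ^ r - 1) ∧
    (∃ a₀ a₁, IsWitness r v.1 v.2.1 v.2.2 a₀ a₁ ∧ 2 ^ r - 1 < a₀ + a₁))

lemma two_pow_pos' (r : ℕ) : 0 < 2^r := Nat.pow_pos (by norm_num)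
lemma testBit_addHigh {r b t : ℕ} (hb : b < 2^r) (ht : t < 2) (i : ℕ) :
    (b + 2^r * t).testBit i = if i < r then b.testBit i else if i = r then decide (t = 1) else false := by
  have hp : 0 < 2^r := two_pow_pos' r
  rcases lt_trichotomy i r with h | rfl | h
  · simp only [if_pos h]
    rw [Nat.testBit_eq_decide_div_mod_eq, Nat.testBit_eq_decide_div_mod_eq]
    have h1 : 2^r = 2^i * 2^(r-i) := by rw [← pow_add]; congr 1; omega
    have h2 : (b + 2^r * t) / 2^i = b / 2^i + 2^(r-i) * t := by
      rw [h1, mul_assoc, Nat.add_mul_div_left _ _ (Nat.pow_pos (by norm_num))]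
    rw [h2]
    have h3 : 2^(r-i) * t = 2 * (2^(r-i-1) * t) := by
      rw [← mul_assoc, ← pow_succ']
      congr 2
      omega
    rw [h3, Nat.add_mul_mod_self_left]
  · simp only [lt_irrefl, if_neg (lt_irrefl i), if_pos rfl]
    rw [Nat.testBit_eq_decide_div_mod_eq]
    rw [Nat.add_mul_div_left _ _ hp, Nat.div_eq_of_lt hb]
    interval_cases t <;> simp
  · rw [if_neg (by omega), if_neg (by omega)]
    apply Nat.testBit_eq_false_of_lt
    calc b + 2^r * t < 2^r + 2^r * 1 := by
          have := Nat.mul_le_mul_left (2^r) (show t ≤ 1 by omega); omega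
    _ = 2^(r+1) := by ring
    _ ≤ 2^i := Nat.pow_le_pow_right (by norm_num) (by omega)
lemma shadow_split {r c b d t : ℕ} (hc : c < 2^r) (hb : b < 2^r) (hd : d < 2) (ht : t < 2) :
    Shadow2 (c + 2^r*d) (b + 2^r*t) ↔ (Shadow2 c b ∧ d ≤ t) := by
  constructor
  · intro h
    constructor
    · intro i hi
      have hir : i < r := by
        by_contra hge
        rw [Nat.testBit_eq_false_of_lt (lt_of_lt_of_le hc (Nat.pow_le_pow_right (by norm_num) (by omega)))] at hi
        exact Bool.noConfusion hi
      have h2 := h i (by rw [testBit_addHigh hc hd, if_pos hir]; exact hi)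
      rw [testBit_addHigh hb ht, if_pos hir] at h2
      exact h2
    · interval_cases d
      · exact Nat.zero_le t
      · have h2 := h r (by rw [testBit_addHigh hc (by norm_num)]; simp)
        rw [testBit_addHigh hb ht] at h2
        simp at h2
        omega
  · rintro ⟨h, hdt⟩ i hi
    rw [testBit_addHigh hc hd] at hi
    rw [testBit_addHigh hb ht]
    split_ifs at hi ⊢ with h1 h2
    · exact h i hi
    · simp only [decide_eq_true_eq] at hi ⊢
      omega
lemma split_div {r b t : ℕ} (hb : b < 2^r) : (b + 2^r * t) / 2^r = t := by
  rw [Nat.add_mul_div_left _ _ (two_pow_pos' r), Nat.div_eq_of_lt hb, Nat.zero_add]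
lemma sum_mod_succ {r y e s k : ℕ} (hy : y < 2^r) (he : e < 2) (hs : s < 2^r) :
    (s + 2^r * k) % 2^(r+1) = y + 2^r * e ↔ (s = y ∧ k % 2 = e) := by
  have hp := two_pow_pos' r
  have hmod : (s + 2^r * k) % 2^(r+1) = s + 2^r * (k % 2) := by
    have h1 : s + 2^r * k = (s + 2^r * (k % 2)) + 2^(r+1) * (k/2) := by
      rw [pow_succ]
      have hk : k = k % 2 + 2*(k/2) := by omega
      calc s + 2^r * k = s + 2^r * (k % 2 + 2*(k/2)) := by rw [← hk]
      _ = s + 2^r * (k % 2) + 2^r * 2 * (k/2) := by ring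
    rw [h1, Nat.add_mul_mod_self_left, Nat.mod_eq_of_lt]
    have h2 : k % 2 ≤ 1 := by omega
    have h3 := Nat.mul_le_mul_left (2^r) h2
    rw [pow_succ]
    omega
  rw [hmod]
  constructor
  · intro h
    have h3 : k % 2 = 0 ∨ k % 2 = 1 := by omega
    rcases h3 with h3 | h3 <;> rcases (show e = 0 ∨ e = 1 by omega) with rfl | rfl <;>
      rw [h3] at h ⊢ <;> simp only [Nat.mul_zero, Nat.mul_one, Nat.add_zero] at h <;> omega
  · rintro ⟨rfl, rfl⟩; rfl
lemma witness_succ {r y c0 c1 e d0 d1 A0 A1 : ℕ} (hy : y < 2^r) (hc0 : c0 < 2^r)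
    (hc1 : c1 < 2^r) (he : e < 2) (hd0 : d0 < 2) (hd1 : d1 < 2) :
    IsWitness (r+1) (y + 2^r*e) (c0 + 2^r*d0) (c1 + 2^r*d1) A0 A1 ↔
    ∃ b0 b1 t0 t1, A0 = b0 + 2^r*t0 ∧ A1 = b1 + 2^r*t1 ∧ t0 < 2 ∧ t1 < 2 ∧
      d0 ≤ t0 ∧ d1 ≤ t1 ∧ IsWitness r y c0 c1 b0 b1 ∧
      (t0 + t1 + (b0+b1)/2^r) % 2 = e := by
  have hp := two_pow_pos' r
  have h2p : (2:ℕ)^(r+1) = 2^r*2 := pow_succ 2 r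
  constructor
  · rintro ⟨hA0, hA1, hs0, hs1, hmod⟩
    have ht0 : A0 / 2^r < 2 := by rw [Nat.div_lt_iff_lt_mul hp]; omega
    have ht1 : A1 / 2^r < 2 := by rw [Nat.div_lt_iff_lt_mul hp]; omega
    have hb0 : A0 % 2^r < 2^r := Nat.mod_lt _ hp
    have hb1 : A1 % 2^r < 2^r := Nat.mod_lt _ hp
    have e0 : A0 = A0 % 2^r + 2^r * (A0 / 2^r) := (Nat.mod_add_div _ _).symm
    have e1 : A1 = A1 % 2^r + 2^r * (A1 / 2^r) := (Nat.mod_add_div _ _).symm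
    have hsh0 := (shadow_split hc0 hb0 hd0 ht0).mp (by rw [← e0]; exact hs0)
    have hsh1 := (shadow_split hc1 hb1 hd1 ht1).mp (by rw [← e1]; exact hs1)
    have hsum : A0 + A1 = (A0 % 2^r + A1 % 2^r) % 2^r
        + 2^r * ((A0 % 2^r + A1 % 2^r)/2^r + (A0/2^r + A1/2^r)) := by
      have h3 := Nat.mod_add_div (A0 % 2^r + A1 % 2^r) (2^r)
      rw [Nat.mul_add, Nat.mul_add]
      omega
    rw [hsum] at hmod
    have hkey := (sum_mod_succ hy he (Nat.mod_lt _ hp)).mp hmod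
    refine ⟨A0 % 2^r, A1 % 2^r, A0 / 2^r, A1 / 2^r, e0, e1, ht0, ht1, hsh0.2, hsh1.2,
      ⟨hb0, hb1, hsh0.1, hsh1.1, hkey.1⟩, ?_⟩
    omega
  · rintro ⟨b0, b1, t0, t1, rfl, rfl, ht0, ht1, h0, h1, ⟨hb0, hb1, sh0, sh1, hbmod⟩, hpar⟩
    have hm0 := Nat.mul_le_mul_left (2^r) (show t0 ≤ 1 by omega)
    have hm1 := Nat.mul_le_mul_left (2^r) (show t1 ≤ 1 by omega)
    refine ⟨by omega, by omega, (shadow_split hc0 hb0 hd0 ht0).mpr ⟨sh0, h0⟩,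
      (shadow_split hc1 hb1 hd1 ht1).mpr ⟨sh1, h1⟩, ?_⟩
    have hsum : (b0 + 2^r*t0) + (b1 + 2^r*t1) = (b0 + b1) % 2^r
        + 2^r * ((b0 + b1)/2^r + (t0 + t1)) := by
      have h3 := Nat.mod_add_div (b0 + b1) (2^r)
      rw [Nat.mul_add, Nat.mul_add]
      omega
    rw [hsum]
    exact (sum_mod_succ hy he (Nat.mod_lt _ hp)).mpr ⟨hbmod, by omega⟩
def WNp (r : ℕ) (v : ℕ × ℕ × ℕ) : Prop :=
  ∃ a0 a1, IsWitness r v.1 v.2.1 v.2.2 a0 a1 ∧ a0 + a1 ≤ 2^r - 1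
def WYp (r : ℕ) (v : ℕ × ℕ × ℕ) : Prop :=
  ∃ a0 a1, IsWitness r v.1 v.2.1 v.2.2 a0 a1 ∧ 2^r - 1 < a0 + a1
lemma carry_lt {r b0 b1 t0 t1 k : ℕ} (hb0 : b0 < 2^r) (hb1 : b1 < 2^r)
    (ht0 : t0 < 2) (ht1 : t1 < 2) (hdiv : (b0+b1)/2^r = k) :
    (2^(r+1) - 1 < (b0 + 2^r*t0) + (b1 + 2^r*t1) ↔ 2 ≤ t0 + t1 + k) := by
  have hp := two_pow_pos' r
  have hsk : (b0+b1) % 2^r + 2^r * k = b0+b1 := by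
    rw [← hdiv]; exact Nat.mod_add_div _ _
  have hs : (b0+b1) % 2^r < 2^r := Nat.mod_lt _ hp
  have hk2 : k < 2 := by rw [← hdiv, Nat.div_lt_iff_lt_mul hp]; omega
  rw [pow_succ]
  rcases (show k = 0 ∨ k = 1 by omega) with rfl | rfl <;>
    interval_cases t0 <;> interval_cases t1 <;>
    simp only [Nat.mul_zero, Nat.mul_one, Nat.add_zero, Nat.zero_add] at * <;> omega
lemma carry_le {r b0 b1 t0 t1 k : ℕ} (hb0 : b0 < 2^r) (hb1 : b1 < 2^r)
    (ht0 : t0 < 2) (ht1 : t1 < 2) (hdiv : (b0+b1)/2^r = k) :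
    ((b0 + 2^r*t0) + (b1 + 2^r*t1) ≤ 2^(r+1) - 1 ↔ t0 + t1 + k ≤ 1) := by
  have h := carry_lt hb0 hb1 ht0 ht1 hdiv
  omega
lemma WY_succ {r y c0 c1 e d0 d1 : ℕ} (hy : y < 2^r) (hc0 : c0 < 2^r)
    (hc1 : c1 < 2^r) (he : e < 2) (hd0 : d0 < 2) (hd1 : d1 < 2) :
    WYp (r+1) (y + 2^r*e, c0 + 2^r*d0, c1 + 2^r*d1) ↔
    ∃ t0 t1 k, t0 < 2 ∧ t1 < 2 ∧ k < 2 ∧ d0 ≤ t0 ∧ d1 ≤ t1 ∧ (t0+t1+k) % 2 = e ∧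
      2 ≤ t0+t1+k ∧ ((k = 0 ∧ WNp r (y,c0,c1)) ∨ (k = 1 ∧ WYp r (y,c0,c1))) := by
  have hp := two_pow_pos' r
  constructor
  · rintro ⟨A0, A1, hw, hgt⟩
    rw [witness_succ hy hc0 hc1 he hd0 hd1] at hw
    obtain ⟨b0, b1, t0, t1, rfl, rfl, ht0, ht1, h0, h1, hwit, hpar⟩ := hw
    have hb0 := hwit.1
    have hb1 := hwit.2.1
    obtain ⟨k, hdiv⟩ : ∃ k, (b0+b1)/2^r = k := ⟨_, rfl⟩
    have hsk : (b0+b1) % 2^r + 2^r * k = b0+b1 := by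
      rw [← hdiv]; exact Nat.mod_add_div _ _
    have hs : (b0+b1) % 2^r < 2^r := Nat.mod_lt _ hp
    have hk2 : k < 2 := by rw [← hdiv, Nat.div_lt_iff_lt_mul hp]; omega
    rw [hdiv] at hpar
    have hge := (carry_lt hb0 hb1 ht0 ht1 hdiv).mp hgt
    refine ⟨t0, t1, k, ht0, ht1, hk2, h0, h1, hpar, hge, ?_⟩
    rcases (show k = 0 ∨ k = 1 by omega) with rfl | rfl
    · exact Or.inl ⟨rfl, b0, b1, hwit, by omega⟩
    · exact Or.inr ⟨rfl, b0, b1, hwit, by omega⟩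
  · rintro ⟨t0, t1, k, ht0, ht1, hk2, h0, h1, hpar, hge, hcase⟩
    rcases hcase with ⟨rfl, b0, b1, hwit, hle⟩ | ⟨rfl, b0, b1, hwit, hlt⟩
    · have hdiv : (b0+b1)/2^r = 0 := Nat.div_eq_of_lt (by omega)
      refine ⟨b0 + 2^r*t0, b1 + 2^r*t1,
        (witness_succ hy hc0 hc1 he hd0 hd1).mpr
          ⟨b0, b1, t0, t1, rfl, rfl, ht0, ht1, h0, h1, hwit, by rw [hdiv]; omega⟩, ?_⟩
      rw [carry_lt hwit.1 hwit.2.1 ht0 ht1 hdiv]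
      omega
    · have hb0 := hwit.1
      have hb1 := hwit.2.1
      have hdiv : (b0+b1)/2^r = 1 := by
        have hl := (Nat.le_div_iff_mul_le hp).mpr (show 1 * 2^r ≤ b0 + b1 by omega)
        have hu : (b0+b1)/2^r < 2 := by rw [Nat.div_lt_iff_lt_mul hp]; omega
        omega
      refine ⟨b0 + 2^r*t0, b1 + 2^r*t1,
        (witness_succ hy hc0 hc1 he hd0 hd1).mpr
          ⟨b0, b1, t0, t1, rfl, rfl, ht0, ht1, h0, h1, hwit, by rw [hdiv]; omega⟩, ?_⟩
      rw [carry_lt hb0 hb1 ht0 ht1 hdiv]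
      omega
lemma WN_succ {r y c0 c1 e d0 d1 : ℕ} (hy : y < 2^r) (hc0 : c0 < 2^r)
    (hc1 : c1 < 2^r) (he : e < 2) (hd0 : d0 < 2) (hd1 : d1 < 2) :
    WNp (r+1) (y + 2^r*e, c0 + 2^r*d0, c1 + 2^r*d1) ↔
    ∃ t0 t1 k, t0 < 2 ∧ t1 < 2 ∧ k < 2 ∧ d0 ≤ t0 ∧ d1 ≤ t1 ∧ (t0+t1+k) % 2 = e ∧
      t0+t1+k ≤ 1 ∧ ((k = 0 ∧ WNp r (y,c0,c1)) ∨ (k = 1 ∧ WYp r (y,c0,c1))) := by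
  have hp := two_pow_pos' r
  constructor
  · rintro ⟨A0, A1, hw, hgt⟩
    rw [witness_succ hy hc0 hc1 he hd0 hd1] at hw
    obtain ⟨b0, b1, t0, t1, rfl, rfl, ht0, ht1, h0, h1, hwit, hpar⟩ := hw
    have hb0 := hwit.1
    have hb1 := hwit.2.1
    obtain ⟨k, hdiv⟩ : ∃ k, (b0+b1)/2^r = k := ⟨_, rfl⟩
    have hsk : (b0+b1) % 2^r + 2^r * k = b0+b1 := by
      rw [← hdiv]; exact Nat.mod_add_div _ _
    have hs : (b0+b1) % 2^r < 2^r := Nat.mod_lt _ hp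
    have hk2 : k < 2 := by rw [← hdiv, Nat.div_lt_iff_lt_mul hp]; omega
    rw [hdiv] at hpar
    have hge := (carry_le hb0 hb1 ht0 ht1 hdiv).mp hgt
    refine ⟨t0, t1, k, ht0, ht1, hk2, h0, h1, hpar, hge, ?_⟩
    rcases (show k = 0 ∨ k = 1 by omega) with rfl | rfl
    · exact Or.inl ⟨rfl, b0, b1, hwit, by omega⟩
    · exact Or.inr ⟨rfl, b0, b1, hwit, by omega⟩
  · rintro ⟨t0, t1, k, ht0, ht1, hk2, h0, h1, hpar, hge, hcase⟩
    rcases hcase with ⟨rfl, b0, b1, hwit, hle⟩ | ⟨rfl, b0, b1, hwit, hlt⟩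
    · have hdiv : (b0+b1)/2^r = 0 := Nat.div_eq_of_lt (by omega)
      refine ⟨b0 + 2^r*t0, b1 + 2^r*t1,
        (witness_succ hy hc0 hc1 he hd0 hd1).mpr
          ⟨b0, b1, t0, t1, rfl, rfl, ht0, ht1, h0, h1, hwit, by rw [hdiv]; omega⟩, ?_⟩
      rw [carry_le hwit.1 hwit.2.1 ht0 ht1 hdiv]
      omega
    · have hb0 := hwit.1
      have hb1 := hwit.2.1
      have hdiv : (b0+b1)/2^r = 1 := by
        have hl := (Nat.le_div_iff_mul_le hp).mpr (show 1 * 2^r ≤ b0 + b1 by omega)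
        have hu : (b0+b1)/2^r < 2 := by rw [Nat.div_lt_iff_lt_mul hp]; omega
        omega
      refine ⟨b0 + 2^r*t0, b1 + 2^r*t1,
        (witness_succ hy hc0 hc1 he hd0 hd1).mpr
          ⟨b0, b1, t0, t1, rfl, rfl, ht0, ht1, h0, h1, hwit, by rw [hdiv]; omega⟩, ?_⟩
      rw [carry_le hb0 hb1 ht0 ht1 hdiv]
      omega
lemma WY_char {r : ℕ} (y c0 c1 e d0 d1 : ℕ) (hy : y < 2^r) (hc0 : c0 < 2^r)
    (hc1 : c1 < 2^r) (he : e < 2) (hd0 : d0 < 2) (hd1 : d1 < 2) :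
    WYp (r+1) (y + 2^r*e, c0 + 2^r*d0, c1 + 2^r*d1) ↔
    ((e = 0 ∧ WNp r (y,c0,c1)) ∨ (WYp r (y,c0,c1) ∧ (e = 1 ∨ d0 = 0 ∨ d1 = 0))) := by
  rw [WY_succ hy hc0 hc1 he hd0 hd1]
  constructor
  · rintro ⟨t0, t1, k, ht0, ht1, hk2, h0, h1, hpar, hge, ⟨rfl, hW⟩ | ⟨rfl, hW⟩⟩ <;>
      interval_cases t0 <;> interval_cases t1 <;> interval_cases e <;>
      simp_all <;> omega
  · intro h
    rcases (show e = 0 ∨ e = 1 by omega) with rfl | rfl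
    · rcases h with ⟨-, hW⟩ | ⟨hW, h'⟩
      · exact ⟨1, 1, 0, by norm_num, by norm_num, by norm_num, by omega, by omega,
          by norm_num, by norm_num, Or.inl ⟨rfl, hW⟩⟩
      · rcases h' with h' | rfl | rfl
        · exact absurd h' (by norm_num)
        · exact ⟨0, 1, 1, by norm_num, by norm_num, by norm_num, le_refl 0, by omega,
            by norm_num, by norm_num, Or.inr ⟨rfl, hW⟩⟩
        · exact ⟨1, 0, 1, by norm_num, by norm_num, by norm_num, by omega, le_refl 0,
            by norm_num, by norm_num, Or.inr ⟨rfl, hW⟩⟩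
    · rcases h with ⟨h', -⟩ | ⟨hW, -⟩
      · exact absurd h' (by norm_num)
      · exact ⟨1, 1, 1, by norm_num, by norm_num, by norm_num, by omega, by omega,
          by norm_num, by norm_num, Or.inr ⟨rfl, hW⟩⟩
lemma WN_char {r : ℕ} (y c0 c1 e d0 d1 : ℕ) (hy : y < 2^r) (hc0 : c0 < 2^r)
    (hc1 : c1 < 2^r) (he : e < 2) (hd0 : d0 < 2) (hd1 : d1 < 2) :
    WNp (r+1) (y + 2^r*e, c0 + 2^r*d0, c1 + 2^r*d1) ↔
    ((WNp r (y,c0,c1) ∧ ((e = 0 ∧ d0 = 0 ∧ d1 = 0) ∨ (e = 1 ∧ (d0 = 0 ∨ d1 = 0)))) ∨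
     (WYp r (y,c0,c1) ∧ e = 1 ∧ d0 = 0 ∧ d1 = 0)) := by
  rw [WN_succ hy hc0 hc1 he hd0 hd1]
  constructor
  · rintro ⟨t0, t1, k, ht0, ht1, hk2, h0, h1, hpar, hge, ⟨rfl, hW⟩ | ⟨rfl, hW⟩⟩ <;>
      interval_cases t0 <;> interval_cases t1 <;> interval_cases e <;>
      simp_all <;> omega
  · intro h
    rcases (show e = 0 ∨ e = 1 by omega) with rfl | rfl
    · rcases h with ⟨hW, ⟨-, rfl, rfl⟩ | ⟨h', -⟩⟩ | ⟨-, h', -⟩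
      · exact ⟨0, 0, 0, by norm_num, by norm_num, by norm_num, le_refl 0, le_refl 0,
          by norm_num, by norm_num, Or.inl ⟨rfl, hW⟩⟩
      · exact absurd h' (by norm_num)
      · exact absurd h' (by norm_num)
    · rcases h with ⟨hW, ⟨h', -⟩ | ⟨-, rfl | rfl⟩⟩ | ⟨hW, -, rfl, rfl⟩
      · exact absurd h' (by norm_num)
      · exact ⟨0, 1, 0, by norm_num, by norm_num, by norm_num, le_refl 0, by omega,
          by norm_num, by norm_num, Or.inl ⟨rfl, hW⟩⟩
      · exact ⟨1, 0, 0, by norm_num, by norm_num, by norm_num, by omega, le_refl 0,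
          by norm_num, by norm_num, Or.inl ⟨rfl, hW⟩⟩
      · exact ⟨0, 0, 1, by norm_num, by norm_num, by norm_num, le_refl 0, le_refl 0,
          by norm_num, by norm_num, Or.inr ⟨rfl, hW⟩⟩
lemma mem_triples {r : ℕ} {v : ℕ × ℕ × ℕ} :
    v ∈ triples r ↔ v.1 < 2^r ∧ v.2.1 < 2^r ∧ v.2.2 < 2^r := by
  simp [triples, Finset.mem_product, Finset.mem_range]
def fE (r : ℕ) (E v : ℕ × ℕ × ℕ) : ℕ × ℕ × ℕ :=
  (v.1 + 2^r * E.1, v.2.1 + 2^r * E.2.1, v.2.2 + 2^r * E.2.2)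
lemma fE_inj (r : ℕ) (E : ℕ × ℕ × ℕ) : Function.Injective (fE r E) := by
  rintro ⟨a, b, c⟩ ⟨a', b', c'⟩ h
  simp only [fE, Prod.ext_iff] at h ⊢
  omega
lemma noCarry_eq (r : ℕ) :
    noCarry r = (triples r).filter (fun v => WNp r v ∧ ¬ WYp r v) := by
  apply Finset.filter_congr
  intro v _
  constructor
  · rintro ⟨⟨a0, a1, hw⟩, hall⟩
    refine ⟨⟨a0, a1, hw, hall _ _ hw⟩, ?_⟩
    rintro ⟨b0, b1, hw', hgt⟩
    exact absurd (hall _ _ hw') (by omega)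
  · rintro ⟨⟨a0, a1, hw, hle⟩, hnot⟩
    refine ⟨⟨a0, a1, hw⟩, fun b0 b1 hw' => ?_⟩
    by_contra hgt
    exact hnot ⟨b0, b1, hw', by omega⟩
lemma yesCarry_eq (r : ℕ) :
    yesCarry r = (triples r).filter (fun v => WYp r v ∧ ¬ WNp r v) := by
  apply Finset.filter_congr
  intro v _
  constructor
  · rintro ⟨⟨a0, a1, hw⟩, hall⟩
    refine ⟨⟨a0, a1, hw, hall _ _ hw⟩, ?_⟩
    rintro ⟨b0, b1, hw', hgt⟩
    exact absurd (hall _ _ hw') (by omega)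
  · rintro ⟨⟨a0, a1, hw, hle⟩, hnot⟩
    refine ⟨⟨a0, a1, hw⟩, fun b0 b1 hw' => ?_⟩
    by_contra hgt
    exact hnot ⟨b0, b1, hw', by omega⟩
lemma maybeCarry_eq (r : ℕ) :
    maybeCarry r = (triples r).filter (fun v => WNp r v ∧ WYp r v) := by
  apply Finset.filter_congr
  intro v _
  exact Iff.rfl
lemma card_WN (r : ℕ) :
    ((triples r).filter (fun v => WNp r v)).card
      = (noCarry r).card + (maybeCarry r).card := by
  rw [noCarry_eq, maybeCarry_eq]
  have h : (triples r).filter (fun v => WNp r v)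
      = (triples r).filter (fun v => WNp r v ∧ ¬ WYp r v)
        ∪ (triples r).filter (fun v => WNp r v ∧ WYp r v) := by
    ext v
    simp only [Finset.mem_union, Finset.mem_filter]
    tauto
  rw [h, Finset.card_union_of_disjoint]
  rw [Finset.disjoint_left]
  intro v hv hv'
  simp only [Finset.mem_filter] at hv hv'
  tauto
lemma card_WY (r : ℕ) :
    ((triples r).filter (fun v => WYp r v)).card
      = (yesCarry r).card + (maybeCarry r).card := by
  rw [yesCarry_eq, maybeCarry_eq]
  have h : (triples r).filter (fun v => WYp r v)
      = (triples r).filter (fun v => WYp r v ∧ ¬ WNp r v)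
        ∪ (triples r).filter (fun v => WNp r v ∧ WYp r v) := by
    ext v
    simp only [Finset.mem_union, Finset.mem_filter]
    tauto
  rw [h, Finset.card_union_of_disjoint]
  rw [Finset.disjoint_left]
  intro v hv hv'
  simp only [Finset.mem_filter] at hv hv'
  tauto
lemma card_V (r : ℕ) :
    ((triples r).filter (fun v => WNp r v ∨ WYp r v)).card
      = (noCarry r).card + (yesCarry r).card + (maybeCarry r).card := by
  rw [noCarry_eq]
  have h : (triples r).filter (fun v => WNp r v ∨ WYp r v)
      = (triples r).filter (fun v => WNp r v ∧ ¬ WYp r v)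
        ∪ (triples r).filter (fun v => WYp r v) := by
    ext v
    simp only [Finset.mem_union, Finset.mem_filter]
    tauto
  rw [h, Finset.card_union_of_disjoint, card_WY, add_assoc]
  rw [Finset.disjoint_left]
  intro v hv hv'
  simp only [Finset.mem_filter] at hv hv'
  tauto
lemma card_filter_succ (r : ℕ) (Q : ℕ × ℕ × ℕ → Prop) [DecidablePred Q] :
    ((triples (r+1)).filter Q).card
      = ∑ E ∈ (Finset.range 2 ×ˢ Finset.range 2 ×ˢ Finset.range 2),
          ((triples r).filter (fun v => Q (fE r E v))).card := by
  have hp := two_pow_pos' r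
  have h2p : (2:ℕ)^(r+1) = 2^r*2 := pow_succ 2 r
  have himg : (triples (r+1)).filter Q
      = (Finset.range 2 ×ˢ Finset.range 2 ×ˢ Finset.range 2).biUnion
          (fun E => ((triples r).filter (fun v => Q (fE r E v))).image (fE r E)) := by
    ext w
    simp only [Finset.mem_filter, Finset.mem_biUnion, Finset.mem_image,
      Finset.mem_product, Finset.mem_range, mem_triples]
    constructor
    · rintro ⟨⟨h1, h2, h3⟩, hQ⟩
      have hw : fE r (w.1/2^r, w.2.1/2^r, w.2.2/2^r) (w.1 % 2^r, w.2.1 % 2^r, w.2.2 % 2^r) = w := by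
        simp only [fE, Prod.ext_iff]
        exact ⟨Nat.mod_add_div _ _, Nat.mod_add_div _ _, Nat.mod_add_div _ _⟩
      refine ⟨(w.1/2^r, w.2.1/2^r, w.2.2/2^r),
        ⟨by rw [Nat.div_lt_iff_lt_mul hp]; omega,
         by rw [Nat.div_lt_iff_lt_mul hp]; omega,
         by rw [Nat.div_lt_iff_lt_mul hp]; omega⟩,
        (w.1 % 2^r, w.2.1 % 2^r, w.2.2 % 2^r),
        ⟨⟨Nat.mod_lt _ hp, Nat.mod_lt _ hp, Nat.mod_lt _ hp⟩, by rw [hw]; exact hQ⟩, hw⟩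
    · rintro ⟨E, ⟨hE1, hE2, hE3⟩, v, ⟨⟨hv1, hv2, hv3⟩, hQ⟩, rfl⟩
      have m1 := Nat.mul_le_mul_left (2^r) (show E.1 ≤ 1 by omega)
      have m2 := Nat.mul_le_mul_left (2^r) (show E.2.1 ≤ 1 by omega)
      have m3 := Nat.mul_le_mul_left (2^r) (show E.2.2 ≤ 1 by omega)
      exact ⟨⟨by simp only [fE]; omega, by simp only [fE]; omega, by simp only [fE]; omega⟩, hQ⟩
  rw [himg, Finset.card_biUnion]
  · exact Finset.sum_congr rfl fun E _ => Finset.card_image_of_injective _ (fE_inj r E)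
  · rintro E hE F hF hne
    rw [Function.onFun, Finset.disjoint_left]
    rintro w hw hw'
    simp only [Finset.mem_image, Finset.mem_filter] at hw hw'
    obtain ⟨v, ⟨hv, -⟩, rfl⟩ := hw
    obtain ⟨u, ⟨hu, -⟩, hequ⟩ := hw'
    rw [mem_triples] at hv hu
    apply hne
    have h1 : F.1 = E.1 := by
      have := congrArg (fun x => x.1 / 2^r) hequ
      simpa only [fE, split_div hu.1, split_div hv.1] using this
    have h2 : F.2.1 = E.2.1 := by
      have := congrArg (fun x => x.2.1 / 2^r) hequ
      simpa only [fE, split_div hu.2.1, split_div hv.2.1] using this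
    have h3 : F.2.2 = E.2.2 := by
      have := congrArg (fun x => x.2.2 / 2^r) hequ
      simpa only [fE, split_div hu.2.2, split_div hv.2.2] using this
    exact Prod.ext h1.symm (Prod.ext h2.symm h3.symm)
lemma yes_term (r e d0 d1 : ℕ) (he : e < 2) (hd0 : d0 < 2) (hd1 : d1 < 2)
    (P : ℕ × ℕ × ℕ → Prop) [DecidablePred P]
    (hP : ∀ v : ℕ × ℕ × ℕ,
      ((((e = 0 ∧ WNp r v) ∨ (WYp r v ∧ (e = 1 ∨ d0 = 0 ∨ d1 = 0))) ∧
        ¬ ((WNp r v ∧ ((e = 0 ∧ d0 = 0 ∧ d1 = 0) ∨ (e = 1 ∧ (d0 = 0 ∨ d1 = 0)))) ∨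
           (WYp r v ∧ e = 1 ∧ d0 = 0 ∧ d1 = 0))) ↔ P v)) :
    ((triples r).filter
        (fun v => WYp (r+1) (fE r (e,d0,d1) v) ∧ ¬ WNp (r+1) (fE r (e,d0,d1) v))).card
      = ((triples r).filter P).card := by
  congr 1
  apply Finset.filter_congr
  intro v hv
  rw [mem_triples] at hv
  rw [show fE r (e,d0,d1) v = (v.1 + 2^r*e, v.2.1 + 2^r*d0, v.2.2 + 2^r*d1) from rfl]
  rw [WY_char v.1 v.2.1 v.2.2 e d0 d1 hv.1 hv.2.1 hv.2.2 he hd0 hd1,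
      WN_char v.1 v.2.1 v.2.2 e d0 d1 hv.1 hv.2.1 hv.2.2 he hd0 hd1]
  exact hP v
lemma maybe_term (r e d0 d1 : ℕ) (he : e < 2) (hd0 : d0 < 2) (hd1 : d1 < 2)
    (P : ℕ × ℕ × ℕ → Prop) [DecidablePred P]
    (hP : ∀ v : ℕ × ℕ × ℕ,
      ((((WNp r v ∧ ((e = 0 ∧ d0 = 0 ∧ d1 = 0) ∨ (e = 1 ∧ (d0 = 0 ∨ d1 = 0)))) ∨
         (WYp r v ∧ e = 1 ∧ d0 = 0 ∧ d1 = 0)) ∧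
        ((e = 0 ∧ WNp r v) ∨ (WYp r v ∧ (e = 1 ∨ d0 = 0 ∨ d1 = 0)))) ↔ P v)) :
    ((triples r).filter
        (fun v => WNp (r+1) (fE r (e,d0,d1) v) ∧ WYp (r+1) (fE r (e,d0,d1) v))).card
      = ((triples r).filter P).card := by
  congr 1
  apply Finset.filter_congr
  intro v hv
  rw [mem_triples] at hv
  rw [show fE r (e,d0,d1) v = (v.1 + 2^r*e, v.2.1 + 2^r*d0, v.2.2 + 2^r*d1) from rfl]
  rw [WY_char v.1 v.2.1 v.2.2 e d0 d1 hv.1 hv.2.1 hv.2.2 he hd0 hd1,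
      WN_char v.1 v.2.1 v.2.2 e d0 d1 hv.1 hv.2.1 hv.2.2 he hd0 hd1]
  exact hP v

/-- `|yesCarry(r+1)| = 3|noCarry(r)| + 6|yesCarry(r)| + 4|maybeCarry(r)|` and
`|maybeCarry(r+1)| = |noCarry(r)| + |yesCarry(r)| + 4|maybeCarry(r)|`. -/
theorem carry_recursions (r : ℕ) :
    (yesCarry (r + 1)).card
        = 3 * (noCarry r).card + 6 * (yesCarry r).card + 4 * (maybeCarry r).card ∧
    (maybeCarry (r + 1)).card
        = (noCarry r).card + (yesCarry r).card + 4 * (maybeCarry r).card := by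
  constructor
  · rw [yesCarry_eq (r+1), card_filter_succ r (fun w => WYp (r+1) w ∧ ¬ WNp (r+1) w)]
    rw [Finset.sum_product]
    simp only [Finset.sum_product, Finset.sum_range_succ, Finset.sum_range_zero, zero_add]
    have T000 := yes_term r 0 0 0 (by norm_num) (by norm_num) (by norm_num)
      (fun v => WYp r v ∧ ¬ WNp r v)
      (by intro v; first | (norm_num; tauto) | norm_num | tauto)
    have T001 := yes_term r 0 0 1 (by norm_num) (by norm_num) (by norm_num)
      (fun v => WNp r v ∨ WYp r v)
      (by intro v; first | (norm_num; tauto) | norm_num | tauto)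
    have T010 := yes_term r 0 1 0 (by norm_num) (by norm_num) (by norm_num)
      (fun v => WNp r v ∨ WYp r v)
      (by intro v; first | (norm_num; tauto) | norm_num | tauto)
    have T011 := yes_term r 0 1 1 (by norm_num) (by norm_num) (by norm_num)
      (fun v => WNp r v)
      (by intro v; first | (norm_num; tauto) | norm_num | tauto)
    have T100 := yes_term r 1 0 0 (by norm_num) (by norm_num) (by norm_num)
      (fun _ => False)
      (by intro v; first | (norm_num; tauto) | norm_num | tauto)
    have T101 := yes_term r 1 0 1 (by norm_num) (by norm_num) (by norm_num)
      (fun v => WYp r v ∧ ¬ WNp r v)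
      (by intro v; first | (norm_num; tauto) | norm_num | tauto)
    have T110 := yes_term r 1 1 0 (by norm_num) (by norm_num) (by norm_num)
      (fun v => WYp r v ∧ ¬ WNp r v)
      (by intro v; first | (norm_num; tauto) | norm_num | tauto)
    have T111 := yes_term r 1 1 1 (by norm_num) (by norm_num) (by norm_num)
      (fun v => WYp r v)
      (by intro v; first | (norm_num; tauto) | norm_num | tauto)
    rw [T000, T001, T010, T011, T100, T101, T110, T111]
    rw [← yesCarry_eq, card_V, card_WN, card_WY]
    simp only [Finset.filter_false, Finset.card_empty]
    omega
  · rw [maybeCarry_eq (r+1), card_filter_succ r (fun w => WNp (r+1) w ∧ WYp (r+1) w)]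
    rw [Finset.sum_product]
    simp only [Finset.sum_product, Finset.sum_range_succ, Finset.sum_range_zero, zero_add]
    have T000 := maybe_term r 0 0 0 (by norm_num) (by norm_num) (by norm_num)
      (fun v => WNp r v)
      (by intro v; first | (norm_num; tauto) | norm_num | tauto)
    have T001 := maybe_term r 0 0 1 (by norm_num) (by norm_num) (by norm_num)
      (fun _ => False)
      (by intro v; first | (norm_num; tauto) | norm_num | tauto)
    have T010 := maybe_term r 0 1 0 (by norm_num) (by norm_num) (by norm_num)
      (fun _ => False)
      (by intro v; first | (norm_num; tauto) | norm_num | tauto)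
    have T011 := maybe_term r 0 1 1 (by norm_num) (by norm_num) (by norm_num)
      (fun _ => False)
      (by intro v; first | (norm_num; tauto) | norm_num | tauto)
    have T100 := maybe_term r 1 0 0 (by norm_num) (by norm_num) (by norm_num)
      (fun v => WYp r v)
      (by intro v; first | (norm_num; tauto) | norm_num | tauto)
    have T101 := maybe_term r 1 0 1 (by norm_num) (by norm_num) (by norm_num)
      (fun v => WNp r v ∧ WYp r v)
      (by intro v; first | (norm_num; tauto) | norm_num | tauto)
    have T110 := maybe_term r 1 1 0 (by norm_num) (by norm_num) (by norm_num)
      (fun v => WNp r v ∧ WYp r v)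
      (by intro v; first | (norm_num; tauto) | norm_num | tauto)
    have T111 := maybe_term r 1 1 1 (by norm_num) (by norm_num) (by norm_num)
      (fun _ => False)
      (by intro v; first | (norm_num; tauto) | norm_num | tauto)
    rw [T000, T001, T010, T011, T100, T101, T110, T111]
    rw [← maybeCarry_eq, card_WN, card_WY]
    simp only [Finset.filter_false, Finset.card_empty]
    omega
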